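/- Let A be a Banach space over ℂ, let (S_n)_{n ∈ ℕ} be a sequence of linear subspaces of A, and let f : ℕ → ℝ with f(n) > 0 for all n. For a ∈ A define N(a) = ‖a‖ + sup_n f(n)⁻¹ · infDist(a, S_n), with values in [0, ∞], and let A^f = { a ∈ A : N(a) < ∞ }. Then A^f, equipped with the norm N, is complete: every sequence (a_k) in A^f that is Cauchy with respect to N converges with respect to N to some a ∈ A^f. -/

import Mathlib

open scoped ENNReal
open Metric

/-- The quasi-locality norm `‖a‖_f = ‖a‖ + sup_n f(n)⁻¹ · infDist(a, S_n)`, with values in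
`[0,∞]`, associated with a decay function `f` and a filtration of local subspaces `S n`. -/
noncomputable def quasiLocalNorm {A : Type*} [NormedAddCommGroup A] [NormedSpace ℂ A]
    (S : ℕ → Submodule ℂ A) (f : ℕ → ℝ) (a : A) : ℝ≥0∞ :=
  (‖a‖₊ : ℝ≥0∞) + ⨆ n, ENNReal.ofReal ((f n)⁻¹ * Metric.infDist a (S n : Set A))

/-- Subadditivity of `infDist` over a subtraction-closed nonempty set. -/
lemma infDist_sub_le_aux {A : Type*} [NormedAddCommGroup A] (s : Set A) (hs : s.Nonempty)
    (hsub : ∀ x ∈ s, ∀ y ∈ s, x - y ∈ s) (y z : A) :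
    infDist (y - z) s ≤ infDist y s + infDist z s := by
  apply le_of_forall_pos_le_add
  intro ε hε
  obtain ⟨u, hu, hyu⟩ := (infDist_lt_iff hs).mp
    (show infDist y s < infDist y s + ε / 2 by linarith)
  obtain ⟨v, hv, hzv⟩ := (infDist_lt_iff hs).mp
    (show infDist z s < infDist z s + ε / 2 by linarith)
  calc infDist (y - z) s ≤ dist (y - z) (u - v) := infDist_le_dist_of_mem (hsub u hu v hv)
    _ ≤ dist y u + dist z v := dist_sub_sub_le y z u v
    _ ≤ infDist y s + infDist z s + ε := by linarith

/-- The quasi-locality norm as a single supremum. -/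
lemma quasiLocalNorm_eq {A : Type*} [NormedAddCommGroup A] [NormedSpace ℂ A]
    (S : ℕ → Submodule ℂ A) (f : ℕ → ℝ) (hf : ∀ n, 0 < f n) (a : A) :
    quasiLocalNorm S f a
      = ⨆ n, ENNReal.ofReal (‖a‖ + (f n)⁻¹ * Metric.infDist a (S n : Set A)) := by
  rw [quasiLocalNorm, ENNReal.add_iSup]
  refine iSup_congr fun n => ?_
  rw [← enorm_eq_nnnorm, ← ofReal_norm,
    ← ENNReal.ofReal_add (norm_nonneg _)
      (mul_nonneg (inv_nonneg.mpr (hf n).le) infDist_nonneg)]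

lemma quasiLocalNorm_le_ofReal_iff {A : Type*} [NormedAddCommGroup A] [NormedSpace ℂ A]
    (S : ℕ → Submodule ℂ A) (f : ℕ → ℝ) (hf : ∀ n, 0 < f n) (a : A) {r : ℝ} (hr : 0 ≤ r) :
    quasiLocalNorm S f a ≤ ENNReal.ofReal r ↔
      ∀ n, ‖a‖ + (f n)⁻¹ * Metric.infDist a (S n : Set A) ≤ r := by
  rw [quasiLocalNorm_eq S f hf, iSup_le_iff]
  refine forall_congr' fun n => ?_
  rw [ENNReal.ofReal_le_ofReal_iff hr]

/-- Subadditivity of the quasi-locality norm for subtraction. -/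
lemma quasiLocalNorm_sub_le {A : Type*} [NormedAddCommGroup A] [NormedSpace ℂ A]
    (S : ℕ → Submodule ℂ A) (f : ℕ → ℝ) (hf : ∀ n, 0 < f n) (u v : A) :
    quasiLocalNorm S f (u - v) ≤ quasiLocalNorm S f u + quasiLocalNorm S f v := by
  rw [quasiLocalNorm_eq S f hf]
  refine iSup_le fun n => ?_
  have h1 : ‖u - v‖ + (f n)⁻¹ * infDist (u - v) (S n : Set A)
      ≤ (‖u‖ + (f n)⁻¹ * infDist u (S n : Set A))
        + (‖v‖ + (f n)⁻¹ * infDist v (S n : Set A)) := by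
    have hd : infDist (u - v) (S n : Set A) ≤ infDist u (S n : Set A) + infDist v (S n : Set A) :=
      infDist_sub_le_aux _ ⟨0, (S n).zero_mem⟩ (fun x hx y hy => (S n).sub_mem hx hy) u v
    have hn : ‖u - v‖ ≤ ‖u‖ + ‖v‖ := norm_sub_le u v
    have hc : (0:ℝ) ≤ (f n)⁻¹ := inv_nonneg.mpr (hf n).le
    nlinarith [mul_le_mul_of_nonneg_left hd hc]
  calc ENNReal.ofReal (‖u - v‖ + (f n)⁻¹ * infDist (u - v) (S n : Set A))
      ≤ ENNReal.ofReal ((‖u‖ + (f n)⁻¹ * infDist u (S n : Set A))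
        + (‖v‖ + (f n)⁻¹ * infDist v (S n : Set A))) := ENNReal.ofReal_le_ofReal h1
    _ ≤ ENNReal.ofReal (‖u‖ + (f n)⁻¹ * infDist u (S n : Set A))
        + ENNReal.ofReal (‖v‖ + (f n)⁻¹ * infDist v (S n : Set A)) := ENNReal.ofReal_add_le
    _ ≤ quasiLocalNorm S f u + quasiLocalNorm S f v := by
        rw [quasiLocalNorm_eq S f hf, quasiLocalNorm_eq S f hf]
        exact add_le_add
          (le_iSup (fun m => ENNReal.ofReal (‖u‖ + (f m)⁻¹ * infDist u (S m : Set A))) n)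
          (le_iSup (fun m => ENNReal.ofReal (‖v‖ + (f m)⁻¹ * infDist v (S m : Set A))) n)

/-- The space `A^f = {a : N(a) < ∞}` is complete for the quasi-locality
norm `N`: every `N`-Cauchy sequence in `A^f` converges in `N` to an element of `A^f`. -/
theorem stmt10 {A : Type*} [NormedAddCommGroup A] [NormedSpace ℂ A] [CompleteSpace A]
    (S : ℕ → Submodule ℂ A) (f : ℕ → ℝ) (hf : ∀ n, 0 < f n)
    (a : ℕ → A) (hfin : ∀ k, quasiLocalNorm S f (a k) < ⊤)
    (hcauchy : ∀ ε : ℝ≥0∞, 0 < ε → ∃ K : ℕ, ∀ k ≥ K, ∀ l ≥ K,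
      quasiLocalNorm S f (a k - a l) < ε) :
    ∃ x : A, quasiLocalNorm S f x < ⊤ ∧
      ∀ ε : ℝ≥0∞, 0 < ε → ∃ K : ℕ, ∀ k ≥ K, quasiLocalNorm S f (a k - x) < ε := by
  -- the underlying norm dominates: `‖y‖₊ ≤ N y`
  have hnorm_le : ∀ y : A, (‖y‖₊ : ℝ≥0∞) ≤ quasiLocalNorm S f y := fun y => le_self_add
  -- `a` is Cauchy in the norm of `A`
  have hCauchy : CauchySeq a := by
    rw [Metric.cauchySeq_iff]
    intro ε hε
    obtain ⟨K, hK⟩ := hcauchy (ENNReal.ofReal ε) (by simpa using hε)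
    refine ⟨K, fun k hk l hl => ?_⟩
    have := lt_of_le_of_lt (hnorm_le (a k - a l)) (hK k hk l hl)
    rw [← enorm_eq_nnnorm, ← ofReal_norm, ENNReal.ofReal_lt_ofReal_iff hε] at this
    simpa [dist_eq_norm] using this
  obtain ⟨x, hx⟩ := cauchySeq_tendsto_of_complete hCauchy
  -- key lower-semicontinuity step
  have key : ∀ (y : A) (r : ℝ), 0 ≤ r → ∀ K : ℕ,
      (∀ l ≥ K, quasiLocalNorm S f (y - a l) ≤ ENNReal.ofReal r) →
      quasiLocalNorm S f (y - x) ≤ ENNReal.ofReal r := by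
    intro y r hr K hK
    rw [quasiLocalNorm_le_ofReal_iff S f hf _ hr]
    intro n
    have hcont : Filter.Tendsto
        (fun l => ‖y - a l‖ + (f n)⁻¹ * infDist (y - a l) (S n : Set A))
        Filter.atTop
        (nhds (‖y - x‖ + (f n)⁻¹ * infDist (y - x) (S n : Set A))) := by
      have hsub : Filter.Tendsto (fun l => y - a l) Filter.atTop (nhds (y - x)) :=
        Filter.Tendsto.const_sub y hx
      exact ((hsub.norm).add
        (((continuous_infDist_pt (S n : Set A)).tendsto _).comp hsub |>.const_mul _))
    refine le_of_tendsto hcont ?_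
    filter_upwards [Filter.eventually_ge_atTop K] with l hl
    exact ((quasiLocalNorm_le_ofReal_iff S f hf _ hr).mp (hK l hl)) n
  refine ⟨x, ?_, ?_⟩
  · -- finiteness of N x
    obtain ⟨K, hK⟩ := hcauchy 1 one_pos
    have h1 : quasiLocalNorm S f (a K - x) ≤ ENNReal.ofReal 1 := by
      refine key (a K) 1 one_pos.le K fun l hl => ?_
      have := hK K le_rfl l hl
      simpa using this.le
    have h2 : quasiLocalNorm S f x
        ≤ quasiLocalNorm S f (a K) + quasiLocalNorm S f (a K - x) := by
      have := quasiLocalNorm_sub_le S f hf (a K) (a K - x)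
      simpa using this
    calc quasiLocalNorm S f x ≤ _ := h2
      _ < ⊤ := ENNReal.add_lt_top.mpr ⟨hfin K, lt_of_le_of_lt h1 (by simp)⟩
  · -- convergence
    intro ε hε
    obtain ⟨ε', hε'0, hε'⟩ := exists_between hε
    have hε'top : ε' ≠ ⊤ := (hε'.trans_le le_top).ne
    set r := ε'.toReal with hr
    have hrpos : 0 < r := ENNReal.toReal_pos hε'0.ne' hε'top
    have hofr : ENNReal.ofReal r = ε' := ENNReal.ofReal_toReal hε'top
    obtain ⟨K, hK⟩ := hcauchy ε' hε'0
    refine ⟨K, fun k hk => ?_⟩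
    have : quasiLocalNorm S f (a k - x) ≤ ENNReal.ofReal r := by
      refine key (a k) r hrpos.le K fun l hl => ?_
      rw [hofr]
      exact (hK k hk l hl).le
    rw [hofr] at this
    exact lt_of_le_of_lt this hε'
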